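/- arXiv:1709.08588 — 2 statements merged into one kernel-verified Lean document; each statement's English description precedes it below -/
import Mathlib

section
/- The convolution (q₀ * x₁²∂_{x₂} q₀)(1,0,0) = 0, where q₀ is the Gaussian kernel of the Kolmogorov-type operator with parameter S ≠ 0. -/
open Matrix Real MeasureTheory

noncomputable section

/-- `A = [[0,0],[S,0]]`. -/
def A (S : ℝ) : Matrix (Fin 2) (Fin 2) ℝ := !![0, 0; S, 0]

/-- `B = (1,0)ᵀ`. -/
def B : Matrix (Fin 2) (Fin 1) ℝ := !![1; 0]

/-- The Gramian `Γ_t = ∫₀ᵗ e^{-τA} B Bᵀ e^{-τAᵀ} dτ` (entrywise integral). -/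
def Γ (S t : ℝ) : Matrix (Fin 2) (Fin 2) ℝ :=
  Matrix.of fun i j =>
    ∫ τ in (0:ℝ)..t,
      (NormedSpace.exp ((-τ) • A S) * (B * Bᵀ) * NormedSpace.exp ((-τ) • (A S)ᵀ)) i j

/-- `G_t = e^{tA} Γ_t e^{tAᵀ}`. -/
def G (S t : ℝ) : Matrix (Fin 2) (Fin 2) ℝ :=
  NormedSpace.exp (t • A S) * Γ S t * NormedSpace.exp (t • (A S)ᵀ)

/-- The Gaussian fundamental solution of the Kolmogorov-type operator
`∂_t - S x₁ ∂_{x₂} - ½ ∂²_{x₁}`. -/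
def q (S : ℝ) (t : ℝ) (x y : Fin 2 → ℝ) : ℝ :=
  Real.exp (-(1/2) * ((y - NormedSpace.exp (t • A S) *ᵥ x) ⬝ᵥ
      ((G S t)⁻¹ *ᵥ (y - NormedSpace.exp (t • A S) *ᵥ x)))) /
    (2 * π * Real.sqrt (G S t).det)

lemma q_diff (S t : ℝ) : Differentiable ℝ (fun w : Fin 2 → ℝ => q S t w 0) := by
  unfold q
  simp only [div_eq_mul_inv, dotProduct, Matrix.mulVec, Pi.sub_apply, Pi.zero_apply]
  fun_prop

lemma q_even_x (S t : ℝ) (w : Fin 2 → ℝ) : q S t (-w) 0 = q S t w 0 := by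
  simp only [q, Matrix.mulVec_neg, zero_sub, sub_neg_eq_add, zero_add,
    neg_dotProduct, dotProduct_neg, neg_neg]

lemma q_even_y (S t : ℝ) (z : Fin 2 → ℝ) : q S t 0 (-z) = q S t 0 z := by
  simp only [q, Matrix.mulVec_zero, Matrix.mulVec_neg, neg_dotProduct,
    dotProduct_neg, neg_neg, sub_zero]

lemma fderiv_even_odd {f : (Fin 2 → ℝ) → ℝ} (hf : Differentiable ℝ f)
    (he : ∀ w, f (-w) = f w) (z v : Fin 2 → ℝ) :
    fderiv ℝ f (-z) v = - fderiv ℝ f z v := by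
  have hneg : Differentiable ℝ (fun w : Fin 2 → ℝ => -w) := fun x => differentiable_id.neg x
  have h1 : fderiv ℝ (fun w => f (-w)) z
      = (fderiv ℝ f (-z)).comp (fderiv ℝ (fun w : Fin 2 → ℝ => -w) z) :=
    fderiv_comp z (hf _) (hneg z)
  have h2 : (fun w => f (-w)) = f := funext he
  rw [h2] at h1
  have h3 : fderiv ℝ (fun w : Fin 2 → ℝ => -w) z = -(ContinuousLinearMap.id ℝ _) := by
    rw [fderiv_fun_neg, fderiv_id']
  rw [h3] at h1
  have := congrArg (fun L => L v) h1
  simp at this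
  linarith

/-- The Duhamel convolution `(q₀ * x₁²∂_{x₂} q₀)(1,0,0)` vanishes. -/
theorem stmt_13 (S : ℝ) (hS : S ≠ 0) :
    (∫ s in (0:ℝ)..1, ∫ z : Fin 2 → ℝ,
      q S s 0 z * ((z 0)^2 * fderiv ℝ (fun w => q S (1 - s) w 0) z (Pi.single 1 1))) = 0 := by
  have key : ∀ s : ℝ, (∫ z : Fin 2 → ℝ,
      q S s 0 z * ((z 0)^2 * fderiv ℝ (fun w => q S (1 - s) w 0) z (Pi.single 1 1))) = 0 := by
    intro s
    set F : (Fin 2 → ℝ) → ℝ := fun z =>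
      q S s 0 z * ((z 0)^2 * fderiv ℝ (fun w => q S (1 - s) w 0) z (Pi.single 1 1)) with hF
    have hodd : ∀ z, F (-z) = - F z := by
      intro z
      have h1 : q S s 0 (-z) = q S s 0 z := q_even_y S s z
      have h2 : fderiv ℝ (fun w => q S (1 - s) w 0) (-z) (Pi.single 1 1)
          = - fderiv ℝ (fun w => q S (1 - s) w 0) z (Pi.single 1 1) :=
        fderiv_even_odd (q_diff S (1 - s)) (fun w => q_even_x S (1 - s) w) z _
      simp only [hF, h1, h2, Pi.neg_apply, neg_sq]
      ring
    have h2 : ∫ z, F (-z) = ∫ z, F z := integral_neg_eq_self F volume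
    simp only [hodd, integral_neg] at h2
    linarith
  calc (∫ s in (0:ℝ)..1, ∫ z : Fin 2 → ℝ,
      q S s 0 z * ((z 0)^2 * fderiv ℝ (fun w => q S (1 - s) w 0) z (Pi.single 1 1)))
      = ∫ s in (0:ℝ)..1, (0:ℝ) := by
        apply intervalIntegral.integral_congr
        intro s _
        exact key s
    _ = 0 := by simp
end
end

section
/- The convolution (q₀ * x₁∂_{x₁} q₀)(1,0,0) = -½ · 1/(2π√det G₁), where q₀ is the Gaussian kernel associated with A = [[0,0],[S,0]], S ≠ 0, B = (1,0)ᵀ. -/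
open Matrix Real MeasureTheory

noncomputable section

open intervalIntegral

lemma gauss1 (b : ℝ) : ∫ x : ℝ, x * Real.exp (-b * x ^ 2) = 0 := by
  have h := MeasureTheory.integral_neg_eq_self (fun x : ℝ => x * Real.exp (-b * x ^ 2)) volume
  simp only [neg_sq, neg_mul] at h
  rw [MeasureTheory.integral_neg] at h
  simp only [neg_mul] at h ⊢
  linarith

lemma gauss2 {b : ℝ} (hb : 0 < b) :
    ∫ x : ℝ, x ^ 2 * Real.exp (-b * x ^ 2) = Real.sqrt (π / b) / (2 * b) := by
  have hu : ∀ x : ℝ, HasDerivAt (fun y : ℝ => y) 1 x := fun x => hasDerivAt_id x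
  have hv : ∀ x : ℝ, HasDerivAt (fun y : ℝ => -(1/(2*b)) * Real.exp (-b * y ^ 2))
      (x * Real.exp (-b * x ^ 2)) x := by
    intro x
    have h1 : HasDerivAt (fun y : ℝ => -b * y ^ 2) (-b * (2 * x)) x := by
      simpa using ((hasDerivAt_pow 2 x).const_mul (-b))
    have h3 := (h1.exp).const_mul (-(1/(2*b)))
    refine h3.congr_deriv ?_
    field_simp
  have hx2 : Integrable (fun x : ℝ => x ^ 2 * Real.exp (-b * x ^ 2)) := by
    have := integrable_rpow_mul_exp_neg_mul_sq hb (s := 2) (by norm_num)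
    simpa [Real.rpow_natCast] using this
  have huv' : Integrable ((fun y : ℝ => y) * fun x => x * Real.exp (-b * x ^ 2)) := by
    have : ((fun y : ℝ => y) * fun x => x * Real.exp (-b * x ^ 2))
        = fun x : ℝ => x ^ 2 * Real.exp (-b * x ^ 2) := by
      funext x; simp [Pi.mul_apply]; ring
    rw [this]; exact hx2
  have hu'v : Integrable ((fun _ : ℝ => (1:ℝ)) * fun y : ℝ => -(1/(2*b)) * Real.exp (-b * y ^ 2)) := by
    have : ((fun _ : ℝ => (1:ℝ)) * fun y : ℝ => -(1/(2*b)) * Real.exp (-b * y ^ 2))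
        = fun y : ℝ => -(1/(2*b)) * Real.exp (-b * y ^ 2) := by funext x; simp
    rw [this]; exact (integrable_exp_neg_mul_sq hb).const_mul _
  have huv : Integrable ((fun y : ℝ => y) * fun y : ℝ => -(1/(2*b)) * Real.exp (-b * y ^ 2)) := by
    have : ((fun y : ℝ => y) * fun y : ℝ => -(1/(2*b)) * Real.exp (-b * y ^ 2))
        = fun y : ℝ => -(1/(2*b)) * (y * Real.exp (-b * y ^ 2)) := by funext x; simp; ring
    rw [this]; exact (integrable_mul_exp_neg_mul_sq hb).const_mul _
  have key := MeasureTheory.integral_mul_deriv_eq_deriv_mul_of_integrable (fun x _ => hu x) (fun x _ => hv x) huv' hu'v huv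
  have e1 : ∫ x : ℝ, x * (x * Real.exp (-b * x ^ 2)) = ∫ x : ℝ, x ^ 2 * Real.exp (-b * x ^ 2) := by
    congr 1; funext x; ring
  rw [e1] at key
  rw [key]
  rw [MeasureTheory.integral_const_mul, MeasureTheory.integral_const_mul, integral_gaussian]
  ring

lemma inner_int {c : ℝ} (hc : 0 < c) (A B k : ℝ) :
    ∫ y : ℝ, (A + B * y) * Real.exp (-c * (y + k) ^ 2)
      = (A - B * k) * Real.sqrt (π / c) := by
  have h := MeasureTheory.integral_add_right_eq_self (μ := volume)
      (fun y : ℝ => (A + B * (y - k)) * Real.exp (-c * y ^ 2)) k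
  simp only [add_sub_cancel_right] at h
  rw [h]
  calc ∫ y : ℝ, (A + B * (y - k)) * Real.exp (-c * y ^ 2)
      = ∫ y : ℝ, ((A - B * k) * Real.exp (-c * y ^ 2) + B * (y * Real.exp (-c * y ^ 2))) := by
        congr 1; funext y; ring
    _ = (A - B * k) * Real.sqrt (π / c) := by
        rw [MeasureTheory.integral_add (((integrable_exp_neg_mul_sq hc).const_mul _))
          ((integrable_mul_exp_neg_mul_sq hc).const_mul _)]
        rw [MeasureTheory.integral_const_mul, MeasureTheory.integral_const_mul,
          integral_gaussian, gauss1]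
        ring

lemma integrable_one_add_sq_gauss {ε : ℝ} (hε : 0 < ε) :
    Integrable (fun u : ℝ => (1 + u ^ 2) * Real.exp (-ε * u ^ 2)) := by
  have : (fun u : ℝ => (1 + u ^ 2) * Real.exp (-ε * u ^ 2))
      = fun u : ℝ => Real.exp (-ε * u ^ 2) + u ^ 2 * Real.exp (-ε * u ^ 2) := by
    funext u; ring
  rw [this]
  exact (integrable_exp_neg_mul_sq hε).add (by
    have := integrable_rpow_mul_exp_neg_mul_sq hε (s := 2) (by norm_num)
    simpa [Real.rpow_natCast] using this)

lemma gauss2d {a b c : ℝ} (α β : ℝ) (ha : 0 < a) (hc : 0 < c) (hd : 0 < a * c - b ^ 2) :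
    ∫ p : ℝ × ℝ, (α * p.1 ^ 2 + β * (p.1 * p.2)) *
        Real.exp (-(a * p.1 ^ 2 + 2 * b * (p.1 * p.2) + c * p.2 ^ 2))
      = (α * c - β * b) * π / (2 * (a * c - b ^ 2) * Real.sqrt (a * c - b ^ 2)) := by
  set D := a * c - b ^ 2 with hD
  set ε := D / (a + c) with hε_def
  have hac : 0 < a + c := by linarith
  have hε : 0 < ε := div_pos hd hac
  set F : ℝ × ℝ → ℝ := fun p => (α * p.1 ^ 2 + β * (p.1 * p.2)) *
      Real.exp (-(a * p.1 ^ 2 + 2 * b * (p.1 * p.2) + c * p.2 ^ 2)) with hF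
  have hcont : Continuous F := by fun_prop
  have hboundfn : Integrable (fun p : ℝ × ℝ =>
      (|α| + |β|) * (((1 + p.1 ^ 2) * Real.exp (-ε * p.1 ^ 2)) *
        ((1 + p.2 ^ 2) * Real.exp (-ε * p.2 ^ 2)))) := by
    exact ((integrable_one_add_sq_gauss hε).mul_prod (integrable_one_add_sq_gauss hε)).const_mul _
  have hInt : Integrable F := by
    refine hboundfn.mono' hcont.aestronglyMeasurable (ae_of_all _ fun p => ?_)
    obtain ⟨x, y⟩ := p
    simp only [hF, Real.norm_eq_abs, abs_mul, Real.abs_exp]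
    have h1 : |α * x ^ 2 + β * (x * y)| ≤ (|α| + |β|) * ((1 + x ^ 2) * (1 + y ^ 2)) := by
      have := abs_add_le (α * x ^ 2) (β * (x * y))
      have e1 : |α * x ^ 2| = |α| * x ^ 2 := by rw [abs_mul, abs_pow, sq_abs]
      have e2 : |β * (x * y)| = |β| * (|x| * |y|) := by rw [abs_mul, abs_mul]
      have hb1 : x ^ 2 ≤ (1 + x ^ 2) * (1 + y ^ 2) := by nlinarith [sq_nonneg x, sq_nonneg y, sq_nonneg (x*y)]
      have hb2 : |x| * |y| ≤ (1 + x ^ 2) * (1 + y ^ 2) := by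
        nlinarith [sq_nonneg (|x| - |y|), abs_nonneg x, abs_nonneg y, sq_abs x, sq_abs y,
          mul_nonneg (abs_nonneg x) (abs_nonneg y)]
      nlinarith [mul_le_mul_of_nonneg_left hb1 (abs_nonneg α),
        mul_le_mul_of_nonneg_left hb2 (abs_nonneg β)]
    have h2 : Real.exp (-(a * x ^ 2 + 2 * b * (x * y) + c * y ^ 2))
        ≤ Real.exp (-ε * x ^ 2) * Real.exp (-ε * y ^ 2) := by
      rw [← Real.exp_add]
      apply Real.exp_le_exp.2
      have : ε * (x ^ 2 + y ^ 2) ≤ a * x ^ 2 + 2 * b * (x * y) + c * y ^ 2 := by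
        rw [hε_def, div_mul_eq_mul_div, div_le_iff₀ hac]
        nlinarith [sq_nonneg (a * x + b * y), sq_nonneg (b * x + c * y)]
      nlinarith
    calc |α * x ^ 2 + β * (x * y)| * Real.exp (-(a * x ^ 2 + 2 * b * (x * y) + c * y ^ 2))
        ≤ ((|α| + |β|) * ((1 + x ^ 2) * (1 + y ^ 2))) *
          (Real.exp (-ε * x ^ 2) * Real.exp (-ε * y ^ 2)) := by
          apply mul_le_mul h1 h2 (Real.exp_pos _).le
          positivity
      _ = (|α| + |β|) * (((1 + x ^ 2) * Real.exp (-ε * x ^ 2)) *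
          ((1 + y ^ 2) * Real.exp (-ε * y ^ 2))) := by ring
  set d := D / c with hd_def
  have hdpos : 0 < d := div_pos hd hc
  have hinner : ∀ x : ℝ, (∫ y : ℝ, F (x, y))
      = ((α - β * b / c) * Real.sqrt (π / c)) * (x ^ 2 * Real.exp (-d * x ^ 2)) := by
    intro x
    have : (fun y : ℝ => F (x, y)) = fun y : ℝ =>
        Real.exp (-d * x ^ 2) * ((α * x ^ 2 + (β * x) * y) * Real.exp (-c * (y + b / c * x) ^ 2)) := by
      funext y
      simp only [hF]
      have hexp : Real.exp (-d * x ^ 2) * Real.exp (-c * (y + b / c * x) ^ 2)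
          = Real.exp (-(a * x ^ 2 + 2 * b * (x * y) + c * y ^ 2)) := by
        rw [← Real.exp_add]
        congr 1
        rw [hd_def, hD]
        field_simp
        ring
      rw [← hexp]
      ring
    rw [this, MeasureTheory.integral_const_mul, inner_int hc]
    ring
  rw [MeasureTheory.Measure.volume_eq_prod, MeasureTheory.integral_prod _
      (by rwa [← MeasureTheory.Measure.volume_eq_prod])]
  change ∫ x, ∫ y, F (x, y) = _
  simp only [hinner]
  rw [MeasureTheory.integral_const_mul, gauss2 hdpos]
  -- algebra with square roots
  have hsc : Real.sqrt (π / c) = Real.sqrt π / Real.sqrt c := Real.sqrt_div pi_nonneg c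
  have hsd : Real.sqrt (π / d) = Real.sqrt π / Real.sqrt d := Real.sqrt_div pi_nonneg d
  have hcd : c * d = D := by rw [hd_def]; field_simp
  have h1 : Real.sqrt c * Real.sqrt d = Real.sqrt D := by rw [← Real.sqrt_mul hc.le, hcd]
  have hππ : Real.sqrt π * Real.sqrt π = π := Real.mul_self_sqrt pi_nonneg
  have hscpos : 0 < Real.sqrt c := Real.sqrt_pos.2 hc
  have hsdpos : 0 < Real.sqrt d := Real.sqrt_pos.2 hdpos
  have hsDpos : 0 < Real.sqrt D := Real.sqrt_pos.2 hd
  rw [hsc, hsd]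
  set spi := Real.sqrt π with hspi_def
  set sc := Real.sqrt c with hsc_def
  set sd := Real.sqrt d with hsd_def
  have hcc : sc * sc = c := Real.mul_self_sqrt hc.le
  have hdd : sd * sd = d := Real.mul_self_sqrt hdpos.le
  rw [← hππ, ← h1, ← hcd, ← hcc, ← hdd]
  have hscne : sc ≠ 0 := hscpos.ne'
  have hsdne : sd ≠ 0 := hsdpos.ne'
  field_simp

lemma exp_of_sq_zero {M : Matrix (Fin 2) (Fin 2) ℝ} (h : M * M = 0) :
    NormedSpace.exp M = 1 + M := by
  rw [NormedSpace.exp_eq_tsum (𝕂 := ℝ)]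
  show (∑' n : ℕ, ((n.factorial : ℝ))⁻¹ • M ^ n) = 1 + M
  have hpow : ∀ n : ℕ, 2 ≤ n → M ^ n = 0 := by
    intro n hn
    have e : M ^ n = M ^ 2 * M ^ (n - 2) := by rw [← pow_add]; congr 1; omega
    rw [e, pow_two, h, Matrix.zero_mul]
  rw [tsum_eq_sum (s := Finset.range 2) (f := fun n : ℕ => ((n.factorial : ℝ)⁻¹) • M ^ n) (by
    intro n hn
    have h2 : 2 ≤ n := by simp only [Finset.mem_range, not_lt] at hn; omega
    show ((n.factorial : ℝ)⁻¹) • M ^ n = 0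
    rw [hpow n h2, smul_zero])]
  simp [Finset.sum_range_succ]

lemma AA_zero (S : ℝ) : A S * A S = 0 := by
  ext i j
  fin_cases i <;> fin_cases j <;>
    simp [A, Matrix.mul_apply, Fin.sum_univ_two]

lemma AT_eq (S : ℝ) : (A S)ᵀ = !![0, S; 0, 0] := by
  ext i j
  fin_cases i <;> fin_cases j <;> simp [A]

lemma expA_eq (S c : ℝ) : NormedSpace.exp (c • A S) = !![1, 0; S * c, 1] := by
  have h : (c • A S) * (c • A S) = 0 := by
    rw [Matrix.smul_mul, Matrix.mul_smul, AA_zero, smul_zero, smul_zero]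
  rw [exp_of_sq_zero h]
  ext i j
  fin_cases i <;> fin_cases j <;>
    (simp [A, Matrix.one_apply]; try ring)

lemma expAT_eq (S c : ℝ) : NormedSpace.exp (c • (A S)ᵀ) = !![1, S * c; 0, 1] := by
  have hAT : (A S)ᵀ * (A S)ᵀ = 0 := by
    rw [← Matrix.transpose_mul, AA_zero, Matrix.transpose_zero]
  have h : (c • (A S)ᵀ) * (c • (A S)ᵀ) = 0 := by
    rw [Matrix.smul_mul, Matrix.mul_smul, hAT, smul_zero, smul_zero]
  rw [exp_of_sq_zero h, AT_eq]
  ext i j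
  fin_cases i <;> fin_cases j <;>
    (simp [Matrix.one_apply]; try ring)

lemma Γ_eq (S t : ℝ) :
    Γ S t = !![t, -(S * t ^ 2 / 2); -(S * t ^ 2 / 2), S ^ 2 * t ^ 3 / 3] := by
  have hmat : ∀ τ : ℝ, (NormedSpace.exp ((-τ) • A S) * (B * Bᵀ) *
      NormedSpace.exp ((-τ) • (A S)ᵀ)) = !![1, -(S*τ); -(S*τ), S^2*τ^2] := by
    intro τ
    have hB : B * Bᵀ = !![1, 0; 0, 0] := by
      ext i j
      fin_cases i <;> fin_cases j <;>
        simp [B, Matrix.mul_apply, Fin.sum_univ_one, Matrix.vecHead, Matrix.vecTail]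
    rw [expA_eq, expAT_eq, hB, Matrix.mul_fin_two, Matrix.mul_fin_two]
    congr 1 <;> ring
  have i0 : (∫ τ in (0:ℝ)..t, (1:ℝ)) = t := by simp
  have i1 : (∫ τ in (0:ℝ)..t, -(S*τ)) = -(S * t ^ 2 / 2) := by
    have e : (fun τ : ℝ => -(S*τ)) = fun τ : ℝ => (-S) * τ := by funext τ; ring
    rw [e, intervalIntegral.integral_const_mul, integral_id]
    ring
  have i2 : (∫ τ in (0:ℝ)..t, S^2*τ^2) = S ^ 2 * t ^ 3 / 3 := by
    rw [intervalIntegral.integral_const_mul, integral_pow]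
    norm_num
    ring
  ext i j
  rw [Γ]
  simp only [Matrix.of_apply]
  simp_rw [hmat]
  fin_cases i <;> fin_cases j <;> simp only [Matrix.cons_val', Matrix.cons_val_zero,
    Matrix.cons_val_one, Matrix.head_cons, Matrix.empty_val', Matrix.cons_val_fin_one,
    Matrix.head_fin_const]
  · exact i0
  · exact i1
  · exact i1
  · exact i2

lemma G_eq (S t : ℝ) :
    G S t = !![t, S * t ^ 2 / 2; S * t ^ 2 / 2, S ^ 2 * t ^ 3 / 3] := by
  rw [G, Γ_eq, expA_eq, expAT_eq, Matrix.mul_fin_two, Matrix.mul_fin_two]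
  congr 1 <;> ring

lemma detG (S t : ℝ) : (G S t).det = S ^ 2 * t ^ 4 / 12 := by
  rw [G_eq, Matrix.det_fin_two_of]; ring

lemma invG {S t : ℝ} (hS : S ≠ 0) (ht : t ≠ 0) :
    (G S t)⁻¹ = !![4/t, -(6/(S*t^2)); -(6/(S*t^2)), 12/(S^2*t^3)] := by
  apply Matrix.inv_eq_right_inv
  rw [G_eq, Matrix.mul_fin_two]
  ext i j
  fin_cases i <;> fin_cases j <;>
    (simp [Matrix.one_apply]; field_simp; ring)
lemma q_left {S s : ℝ} (hS : S ≠ 0) (hs : s ≠ 0) (z : Fin 2 → ℝ) :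
    q S s 0 z = Real.exp (-(1/2) * (4/s * (z 0 * z 0) - 12/(S*s^2) * (z 0 * z 1)
        + 12/(S^2*s^3) * (z 1 * z 1))) / (2 * π * Real.sqrt (S^2*s^4/12)) := by
  rw [q, Matrix.mulVec_zero, sub_zero, invG hS hs, detG]
  congr 2
  simp [Matrix.mulVec, dotProduct, Fin.sum_univ_two, Matrix.vecHead, Matrix.vecTail]
  ring

lemma q_right {S t : ℝ} (hS : S ≠ 0) (ht : t ≠ 0) (w : Fin 2 → ℝ) :
    q S t w 0 = Real.exp (-(1/2) * (4/t * (w 0 * w 0) + 12/(S*t^2) * (w 0 * w 1)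
        + 12/(S^2*t^3) * (w 1 * w 1))) / (2 * π * Real.sqrt (S^2*t^4/12)) := by
  rw [q, invG hS ht, detG, expA_eq]
  congr 2
  simp [Matrix.mulVec, dotProduct, Fin.sum_univ_two, Matrix.vecHead, Matrix.vecTail]
  field_simp
  ring
lemma q_hasFDeriv {S t : ℝ} (hS : S ≠ 0) (ht : t ≠ 0) (z : Fin 2 → ℝ) :
    fderiv ℝ (fun w => q S t w 0) z (Pi.single 0 1)
      = q S t z 0 * (-(1/2) * (8/t * z 0 + 12/(S*t^2) * z 1)) := by
  set c0 : ℝ := 2 * π * Real.sqrt (S^2*t^4/12) with hc0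
  set φ : (Fin 2 → ℝ) → ℝ := fun w => -(1/2) * (4/t * (w 0 * w 0) + 12/(S*t^2) * (w 0 * w 1)
      + 12/(S^2*t^3) * (w 1 * w 1)) with hφ
  have hq : (fun w : Fin 2 → ℝ => q S t w 0) = fun w => (1/c0) * Real.exp (φ w) := by
    funext w
    rw [q_right hS ht w]
    rw [hφ, hc0]
    ring
  have h0 : HasFDerivAt (fun w : Fin 2 → ℝ => w 0)
      (ContinuousLinearMap.proj (R := ℝ) (φ := fun _ : Fin 2 => ℝ) 0) z :=
    (ContinuousLinearMap.proj (R := ℝ) (φ := fun _ : Fin 2 => ℝ) 0).hasFDerivAt (x := z)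
  have h1 : HasFDerivAt (fun w : Fin 2 → ℝ => w 1)
      (ContinuousLinearMap.proj (R := ℝ) (φ := fun _ : Fin 2 => ℝ) 1) z :=
    (ContinuousLinearMap.proj (R := ℝ) (φ := fun _ : Fin 2 => ℝ) 1).hasFDerivAt (x := z)
  have hφ' := ((((h0.mul h0).const_mul (4/t)).add
      ((h0.mul h1).const_mul (12/(S*t^2)))).add
      ((h1.mul h1).const_mul (12/(S^2*t^3)))).const_mul (-(1/2))
  have hexp := hφ'.exp
  have htot := hexp.const_mul (1/c0)
  rw [hq]
  rw [HasFDerivAt.fderiv (f := fun w => 1 / c0 * rexp (φ w)) htot]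
  simp only [ContinuousLinearMap.coe_smul', Pi.smul_apply, ContinuousLinearMap.add_apply,
    ContinuousLinearMap.coe_add', ContinuousLinearMap.smul_apply,
    ContinuousLinearMap.proj_apply, smul_eq_mul, Pi.add_apply, Pi.mul_apply]
  rw [Pi.single_eq_same, Pi.single_eq_of_ne (by norm_num : (1 : Fin 2) ≠ 0)]
  rw [q_right hS ht z, ← hc0]
  ring
lemma sqrt_helper (S x : ℝ) (hx : 0 ≤ x) :
    Real.sqrt (S^2 * x^4 / 12) = |S| * x^2 * Real.sqrt 3 / 6 := by
  rw [show S^2 * x^4 / 12 = (|S| * x^2 * Real.sqrt 3 / 6)^2 by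
    rw [div_pow, mul_pow, mul_pow, Real.sq_sqrt (by norm_num : (0:ℝ) ≤ 3), sq_abs]
    ring]
  exact Real.sqrt_sq (by positivity)

set_option maxHeartbeats 1000000 in
lemma alg (S s : ℝ) (hS : S ≠ 0) (hs0 : 0 < s) (hs1 : s < 1) :
  1 / (2 * π * (|S| * s ^ 2 * Real.sqrt 3 / 6) * (2 * π * (|S| * (1 - s) ^ 2 * Real.sqrt 3 / 6))) *
      ((-(4 / (1 - s)) * (6 / (S ^ 2 * s ^ 3) + 6 / (S ^ 2 * (1 - s) ^ 3)) -
          -(6 / (S * (1 - s) ^ 2)) * (3 / (S * (1 - s) ^ 2) - 3 / (S * s ^ 2))) * π /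
        (2 * (3 / (S ^ 2 * s ^ 4 * (1 - s) ^ 4)) * (Real.sqrt 3 / (|S| * s ^ 2 * (1 - s) ^ 2)))) =
    -(Real.sqrt 3 / (π * |S|)) * (6 * s ^ 3 - 9 * s ^ 2 + 4 * s) := by
  have ht0 : 0 < 1 - s := by linarith
  have htne : (1:ℝ) - s ≠ 0 := ht0.ne'
  have hsne : s ≠ 0 := hs0.ne'
  have habs : |S| * |S| = S^2 := by rw [abs_mul_abs_self]; ring
  have habsne : |S| ≠ 0 := abs_ne_zero.2 hS
  have hr3' : Real.sqrt 3 ^ 2 = 3 := Real.sq_sqrt (by norm_num)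
  have hr3ne : Real.sqrt 3 ≠ 0 := by positivity
  have hπ : π ≠ 0 := Real.pi_ne_zero
  rw [← habs]
  field_simp
  ring_nf
  have h9 : Real.sqrt 3 ^ 4 = 9 := by
    rw [show (4:ℕ) = 2*2 from rfl, pow_mul, hr3']; norm_num
  simp only [h9, sq_abs]
  ring

set_option maxHeartbeats 1000000 in
lemma inner_eq {S s : ℝ} (hS : S ≠ 0) (hs0 : 0 < s) (hs1 : s < 1) :
    (∫ z : Fin 2 → ℝ, q S s 0 z *
        (z 0 * fderiv ℝ (fun w => q S (1 - s) w 0) z (Pi.single 0 1)))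
      = -(Real.sqrt 3 / (π * |S|)) * (6*s^3 - 9*s^2 + 4*s) := by
  have ht0 : 0 < 1 - s := by linarith
  have hsne : s ≠ 0 := hs0.ne'
  have htne : (1:ℝ) - s ≠ 0 := ht0.ne'
  have hS2 : 0 < S^2 := lt_of_le_of_ne (sq_nonneg S) (Ne.symm (pow_ne_zero 2 hS))
  set aa : ℝ := 2/s + 2/(1-s) with haa
  set bb : ℝ := 3/(S*(1-s)^2) - 3/(S*s^2) with hbb
  set cc : ℝ := 6/(S^2*s^3) + 6/(S^2*(1-s)^3) with hcc
  set αα : ℝ := -(4/(1-s)) with hαα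
  set ββ : ℝ := -(6/(S*(1-s)^2)) with hββ
  set CC : ℝ := 1/((2 * π * Real.sqrt (S^2*s^4/12)) * (2 * π * Real.sqrt (S^2*(1-s)^4/12)))
    with hCC
  have key : ∀ z : Fin 2 → ℝ, q S s 0 z *
      (z 0 * fderiv ℝ (fun w => q S (1 - s) w 0) z (Pi.single 0 1))
      = CC * ((αα * (z 0)^2 + ββ * (z 0 * z 1)) *
          Real.exp (-(aa * (z 0)^2 + 2*bb*(z 0 * z 1) + cc * (z 1)^2))) := by
    intro z
    rw [q_hasFDeriv hS htne z, q_left hS hsne z, q_right hS htne z]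
    have hee : Real.exp (-(1/2) * (4/s * (z 0 * z 0) - 12/(S*s^2) * (z 0 * z 1)
          + 12/(S^2*s^3) * (z 1 * z 1))) *
        Real.exp (-(1/2) * (4/(1-s) * (z 0 * z 0) + 12/(S*(1-s)^2) * (z 0 * z 1)
          + 12/(S^2*(1-s)^3) * (z 1 * z 1)))
        = Real.exp (-(aa * (z 0)^2 + 2*bb*(z 0 * z 1) + cc * (z 1)^2)) := by
      rw [← Real.exp_add]
      congr 1
      rw [haa, hbb, hcc]
      field_simp
      ring
    rw [← hee, hCC, hαα, hββ]
    ring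
  simp_rw [key]
  rw [MeasureTheory.integral_const_mul]
  have hswap : (∫ z : Fin 2 → ℝ, (αα * (z 0)^2 + ββ * (z 0 * z 1)) *
      Real.exp (-(aa * (z 0)^2 + 2*bb*(z 0 * z 1) + cc * (z 1)^2)))
      = ∫ p : ℝ × ℝ, (αα * p.1^2 + ββ * (p.1 * p.2)) *
          Real.exp (-(aa * p.1^2 + 2*bb*(p.1*p.2) + cc * p.2^2)) := by
    rw [← MeasurePreserving.integral_comp' (f := MeasurableEquiv.finTwoArrow)
      (MeasureTheory.volume_preserving_finTwoArrow ℝ)]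
    simp [MeasurableEquiv.finTwoArrow_apply, Matrix.cons_val_zero, Matrix.cons_val_one]
  rw [hswap]
  have ha : 0 < aa := by
    rw [haa]; exact add_pos (div_pos two_pos hs0) (div_pos two_pos ht0)
  have hc : 0 < cc := by
    rw [hcc]
    exact add_pos (div_pos (by norm_num) (by positivity)) (div_pos (by norm_num) (by positivity))
  have hDval : aa * cc - bb^2 = 3/(S^2*s^4*(1-s)^4) := by
    rw [haa, hbb, hcc]
    field_simp
    ring
  have hd : 0 < aa * cc - bb^2 := by rw [hDval]; positivity
  rw [gauss2d αα ββ ha hc hd, hDval]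
  -- now pure algebra with square roots
  have h12s := sqrt_helper S s hs0.le
  have h12t := sqrt_helper S (1-s) ht0.le
  have hDsqrt : Real.sqrt (3/(S^2*s^4*(1-s)^4)) = Real.sqrt 3 / (|S| * s^2 * (1-s)^2) := by
    rw [show 3/(S^2*s^4*(1-s)^4) = (Real.sqrt 3 / (|S| * s^2 * (1-s)^2))^2 by
      rw [div_pow, Real.sq_sqrt (by norm_num : (0:ℝ) ≤ 3), mul_pow, mul_pow, sq_abs]
      ring]
    exact Real.sqrt_sq (by positivity)
  rw [hCC, h12s, h12t, hDsqrt, hαα, hββ, hbb, hcc]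
  exact alg S s hS hs0 hs1

/-- The Duhamel convolution `(q₀ * x₁∂_{x₁} q₀)(1,0,0) = -½ · 1/(2π√det G₁)`. -/
theorem stmt_14 (S : ℝ) (hS : S ≠ 0) :
    (∫ s in (0:ℝ)..1, ∫ z : Fin 2 → ℝ,
      q S s 0 z * (z 0 * fderiv ℝ (fun w => q S (1 - s) w 0) z (Pi.single 0 1))) =
    -(1/2) * (1 / (2 * π * Real.sqrt (G S 1).det)) := by
  have h01 : (0:ℝ) ≤ 1 := by norm_num
  have hcongr : (∫ s in (0:ℝ)..1, ∫ z : Fin 2 → ℝ,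
      q S s 0 z * (z 0 * fderiv ℝ (fun w => q S (1 - s) w 0) z (Pi.single 0 1)))
      = ∫ s in (0:ℝ)..1, -(Real.sqrt 3 / (π * |S|)) * (6*s^3 - 9*s^2 + 4*s) := by
    rw [intervalIntegral.integral_of_le h01, intervalIntegral.integral_of_le h01,
      MeasureTheory.integral_Ioc_eq_integral_Ioo, MeasureTheory.integral_Ioc_eq_integral_Ioo]
    apply MeasureTheory.setIntegral_congr_fun measurableSet_Ioo
    intro s hs
    exact inner_eq hS hs.1 hs.2
  rw [hcongr]
  have hpoly : (∫ s in (0:ℝ)..1, (6*s^3 - 9*s^2 + 4*s)) = 1/2 := by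
    have hderiv : ∀ x ∈ Set.uIcc (0:ℝ) 1,
        HasDerivAt (fun u : ℝ => (3/2)*u^4 - 3*u^3 + 2*u^2) (6*x^3 - 9*x^2 + 4*x) x := by
      intro x _
      have h1 := ((hasDerivAt_pow 4 x).const_mul (3/2 : ℝ))
      have h2 := ((hasDerivAt_pow 3 x).const_mul (3 : ℝ))
      have h3 := ((hasDerivAt_pow 2 x).const_mul (2 : ℝ))
      refine ((h1.sub h2).add h3).congr_deriv ?_
      push_cast
      ring
    rw [intervalIntegral.integral_eq_sub_of_hasDerivAt hderiv (by
      apply Continuous.intervalIntegrable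
      continuity)]
    norm_num
  rw [intervalIntegral.integral_const_mul, hpoly, detG]
  have h12 : Real.sqrt (S^2 * 1^4/12) = |S| * 1^2 * Real.sqrt 3 / 6 :=
    sqrt_helper S 1 (by norm_num)
  rw [h12]
  have hr3' : Real.sqrt 3 ^ 2 = 3 := Real.sq_sqrt (by norm_num)
  have hr3ne : Real.sqrt 3 ≠ 0 := by positivity
  have habsne : |S| ≠ 0 := abs_ne_zero.2 hS
  have hπ : π ≠ 0 := Real.pi_ne_zero
  field_simp
  linear_combination (-2) * hr3'
end
end
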